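/- For g(x) = (2λ)⁻¹‖x - x̄‖² with λ > 0 and fixed x̄ ∈ ℝⁿ, the ε-subdifferential at any x is ∂_ε g(x) = { λ⁻¹(x - x̄ + e) : ‖e‖² ≤ 2λε }. -/

import Mathlib

open RealInnerProductSpace

theorem stmt_4 {n : ℕ} (lam : ℝ) (hlam : 0 < lam)
    (xb x : EuclideanSpace ℝ (Fin n)) (ε : ℝ) (hε : 0 ≤ ε) :
    {v | ∀ y, ⟪v, y - x⟫ ≤
        (2 * lam)⁻¹ * ‖y - xb‖ ^ 2 - (2 * lam)⁻¹ * ‖x - xb‖ ^ 2 + ε} =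
      {v | ∃ e, ‖e‖ ^ 2 ≤ 2 * lam * ε ∧ v = lam⁻¹ • (x - xb + e)} := by
  have h2l : (0:ℝ) < 2 * lam := by linarith
  ext v
  simp only [Set.mem_setOf_eq]
  constructor
  · intro h
    refine ⟨lam • v - (x - xb), ?_, ?_⟩
    · have h1 := h (x + (lam • v - (x - xb)))
      have hy : (x + (lam • v - (x - xb))) - x = lam • v - (x - xb) := by abel
      have hy2 : (x + (lam • v - (x - xb))) - xb = (x - xb) + (lam • v - (x - xb)) := by abel
      rw [hy, hy2, norm_add_sq_real] at h1
      set e := lam • v - (x - xb) with he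
      have h2 : ‖e‖ ^ 2 = lam * ⟪v, e⟫ - ⟪x - xb, e⟫ := by
        rw [← real_inner_self_eq_norm_sq, he, inner_sub_left, real_inner_smul_left]
      rw [show (2 * lam)⁻¹ * (‖x - xb‖ ^ 2 + 2 * ⟪x - xb, e⟫ + ‖e‖ ^ 2)
            - (2 * lam)⁻¹ * ‖x - xb‖ ^ 2 + ε
          = (2 * ⟪x - xb, e⟫ + ‖e‖ ^ 2 + 2 * lam * ε) / (2 * lam) from by
        field_simp; ring] at h1
      rw [le_div_iff₀ h2l] at h1
      nlinarith [h1, h2]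
    · rw [show x - xb + (lam • v - (x - xb)) = lam • v by abel, smul_smul,
        inv_mul_cancel₀ hlam.ne', one_smul]
  · rintro ⟨e, he, rfl⟩ y
    have key : 2 * ⟪e, y - x⟫ ≤ ‖e‖ ^ 2 + ‖y - x‖ ^ 2 := by
      nlinarith [norm_sub_sq_real e (y - x), sq_nonneg ‖e - (y - x)‖]
    have hnorm : ‖y - xb‖ ^ 2 = ‖x - xb‖ ^ 2 + 2 * ⟪x - xb, y - x⟫ + ‖y - x‖ ^ 2 := by
      rw [show y - xb = (x - xb) + (y - x) by abel, norm_add_sq_real]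
    have hinner : ⟪lam⁻¹ • (x - xb + e), y - x⟫
        = lam⁻¹ * (⟪x - xb, y - x⟫ + ⟪e, y - x⟫) := by
      rw [real_inner_smul_left, inner_add_left]
    rw [hinner, hnorm,
      show (2 * lam)⁻¹ * (‖x - xb‖ ^ 2 + 2 * ⟪x - xb, y - x⟫ + ‖y - x‖ ^ 2)
            - (2 * lam)⁻¹ * ‖x - xb‖ ^ 2 + ε
          = (2 * ⟪x - xb, y - x⟫ + ‖y - x‖ ^ 2 + 2 * lam * ε) / (2 * lam) from by
        field_simp; ring,
      show lam⁻¹ * (⟪x - xb, y - x⟫ + ⟪e, y - x⟫)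
          = (2 * ⟪x - xb, y - x⟫ + 2 * ⟪e, y - x⟫) / (2 * lam) from by
        field_simp,
      div_le_div_iff_of_pos_right h2l]
    nlinarith [key, he, hlam]
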